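/- Under the hypotheses of the empirical error theorem — k ≥ 2, λ ≥ 0, m ∈ ℝ⁴_{≥0}, a c-conjugate tuple f ∈ (𝒞_m)^k with zero set Γ and curve γ = γ_f, independent U, R with U ∈ Γ a.s., E[R] = 0, X = U + R with E‖X‖² < ∞, i.i.d. samples X_1, …, X_n, and f̂ a random c-conjugate empirical minimizer in (𝒞_m)^k of n^{-1} Σ_m [ H(X_m; h) + λ ‖X_m − γ_h(s(X_m))‖² ] with γ̂ = γ_{f̂} — assume additionally that the components of the noise are mutually uncorrelated: E[R_i R_j] = 0 for all i ≠ j. Then E[ n^{-1} Σ_{m=1}^n ‖γ(s(X_m)) − γ̂(s(X_m))‖² ] ≤ (32λ + 2m₂ + 8)/(2λ + 1) · E‖R‖², a bound not depending on the dimension k. -/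

import Mathlib

open MeasureTheory ProbabilityTheory Finset

noncomputable section

/-- The admissible class `𝒞_m`: `C²` functions with `|f(0)| ≤ m₀`, `|f'(0)| ≤ m₁`,
`0 ≤ f'' ≤ m₂`, and `f''` Lipschitz with constant `m₃`. -/
def Cm (m₀ m₁ m₂ m₃ : ℝ) : Set (ℝ → ℝ) :=
  {f | ContDiff ℝ 2 f ∧ |f 0| ≤ m₀ ∧ |deriv f 0| ≤ m₁ ∧
    (∀ x : ℝ, 0 ≤ deriv (deriv f) x ∧ deriv (deriv f) x ≤ m₂) ∧
    (∀ x x' : ℝ, |deriv (deriv f) x - deriv (deriv f) x'| ≤ m₃ * |x - x'|)}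

/-- The diagonal coordinate `s(x) = Σ_i x_i`. -/
def sCoord {k : ℕ} (x : Fin k → ℝ) : ℝ := ∑ i, x i

/-- The pairwise-product cost `c(x) = Σ_{i<j} x_i x_j`. -/
def cCost {k : ℕ} (x : Fin k → ℝ) : ℝ :=
  ∑ p ∈ Finset.univ.filter (fun p : Fin k × Fin k => p.1 < p.2), x p.1 * x p.2

/-- The loss `H(x; f) = Σ_i f_i(x_i) − c(x)`. -/
def Hfun {k : ℕ} (f : Fin k → ℝ → ℝ) (x : Fin k → ℝ) : ℝ :=
  (∑ i, f i (x i)) - cCost x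

/-- The tuple `f` is `c`-conjugate: each `f_i(t)` is the supremum of
`c(x) − Σ_{j≠i} f_j(x_j)` over all `x` with `x_i = t`. -/
def CConjugateTuple {k : ℕ} (f : Fin k → ℝ → ℝ) : Prop :=
  ∀ (i : Fin k) (t : ℝ),
    IsLUB {v : ℝ | ∃ x : Fin k → ℝ, x i = t ∧
      v = cCost x - ∑ j ∈ Finset.univ.erase i, f j (x j)} (f i t)

/-- The monotone curve `γ_f(t) = ((g_1')⁻¹(t), …, (g_k')⁻¹(t))` where `g_i = f_i + q`,
`q(x) = x²/2`, so that `g_i'(y) = f_i'(y) + y`. -/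
def curveOf {k : ℕ} (f : Fin k → ℝ → ℝ) (t : ℝ) : Fin k → ℝ :=
  fun i => Function.invFun (fun y : ℝ => deriv (f i) y + y) t

/-- The empirical objective
`n⁻¹ Σ_m [H(X_m; h) + λ ‖X_m − γ_h(s(X_m))‖²]` for samples `X_1, …, X_n`. -/
def empObj {k : ℕ} (n : ℕ) (lam : ℝ) (X : Fin n → Fin k → ℝ)
    (h : Fin k → ℝ → ℝ) : ℝ :=
  (n : ℝ)⁻¹ * ∑ m : Fin n,
    (Hfun h (X m) + lam * ∑ i, (X m i - curveOf h (sCoord (X m)) i) ^ 2)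

section AuxCC
open Finset
lemma cCost_eq {k : ℕ} (x : Fin k → ℝ) :
    cCost x = ((sCoord x)^2 - ∑ i, (x i)^2) / 2 := by
  have key : (sCoord x)^2 = ∑ p ∈ (univ : Finset (Fin k × Fin k)), x p.1 * x p.2 := by
    rw [sCoord, sq, Finset.sum_mul_sum, ← Finset.univ_product_univ, Finset.sum_product]
  have split1 : ∑ p ∈ (univ : Finset (Fin k × Fin k)), x p.1 * x p.2 =
      (∑ p ∈ univ.filter (fun p : Fin k × Fin k => p.1 < p.2), x p.1 * x p.2) +
      ∑ p ∈ univ.filter (fun p : Fin k × Fin k => ¬ p.1 < p.2), x p.1 * x p.2 :=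
    (Finset.sum_filter_add_sum_filter_not _ _ _).symm
  have split2 : ∑ p ∈ univ.filter (fun p : Fin k × Fin k => ¬ p.1 < p.2), x p.1 * x p.2 =
      (∑ p ∈ univ.filter (fun p : Fin k × Fin k => p.2 < p.1), x p.1 * x p.2) +
      ∑ i, (x i)^2 := by
    have h1 : univ.filter (fun p : Fin k × Fin k => ¬ p.1 < p.2) =
        (univ.filter (fun p : Fin k × Fin k => p.2 < p.1)) ∪
        (univ.filter (fun p : Fin k × Fin k => p.1 = p.2)) := by
      ext p
      simp only [mem_filter, mem_union, mem_univ, true_and, not_lt]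
      constructor
      · intro hle
        rcases lt_or_eq_of_le hle with h | h
        · exact Or.inl h
        · exact Or.inr h.symm
      · rintro (h | h)
        · exact h.le
        · exact h.ge
    have h2 : Disjoint (univ.filter (fun p : Fin k × Fin k => p.2 < p.1))
        (univ.filter (fun p : Fin k × Fin k => p.1 = p.2)) := by
      rw [Finset.disjoint_left]
      intro p hp hp'
      simp only [mem_filter, mem_univ, true_and] at hp hp'
      omega
    rw [h1, Finset.sum_union h2]
    congr 1
    rw [Finset.sum_filter, ← Finset.univ_product_univ, Finset.sum_product]
    simp [Finset.sum_ite_eq, sq]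
  have swapeq : ∑ p ∈ univ.filter (fun p : Fin k × Fin k => p.2 < p.1), x p.1 * x p.2 =
      ∑ p ∈ univ.filter (fun p : Fin k × Fin k => p.1 < p.2), x p.1 * x p.2 := by
    apply Finset.sum_nbij' (fun p => Prod.swap p) (fun p => Prod.swap p) <;>
      simp [mul_comm]
  rw [cCost]
  rw [split2, swapeq] at split1
  linarith [key, split1]
end AuxCC

section Single
open Function Set
variable {p : ℝ → ℝ} {m₂ : ℝ}

lemma pc_d1 (hC : ContDiff ℝ 2 p) : Differentiable ℝ p :=
  hC.differentiable (by norm_num)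

lemma pc_d2 (hC : ContDiff ℝ 2 p) : Differentiable ℝ (deriv p) :=
  ((contDiff_succ_iff_deriv (n := 1)).mp (by exact_mod_cast hC)).2.2.differentiable (by norm_num)

lemma pc_mono1 (hC : ContDiff ℝ 2 p) (h0 : ∀ x, 0 ≤ deriv (deriv p) x) :
    Monotone (deriv p) :=
  monotone_of_deriv_nonneg (pc_d2 hC) h0

/-- tangent line below for function with monotone derivative -/
lemma tangent_le {F : ℝ → ℝ} (hd : Differentiable ℝ F) (hm : Monotone (deriv F))
    (a b : ℝ) : F a + deriv F a * (b - a) ≤ F b := by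
  rcases le_total a b with hab | hab
  · have := (convex_Ici a).mul_sub_le_image_sub_of_le_deriv
      (hd.continuous.continuousOn) (hd.differentiableOn)
      (fun x hx => hm (le_of_lt (by simpa [interior_Ici] using hx)))
      a self_mem_Ici b hab hab
    linarith
  · have := (convex_Iic a).image_sub_le_mul_sub_of_deriv_le
      (hd.continuous.continuousOn) (hd.differentiableOn)
      (fun x hx => hm (le_of_lt (by simpa [interior_Iic] using hx)))
      b hab a self_mem_Iic hab
    linarith

lemma pc_lip1 (hC : ContDiff ℝ 2 p) (h2 : ∀ x, deriv (deriv p) x ≤ m₂) :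
    ∀ a b : ℝ, a ≤ b → deriv p b - deriv p a ≤ m₂ * (b - a) :=
  fun _ _ hab => image_sub_le_mul_sub_of_deriv_le (pc_d2 hC) h2 hab

/-- Bregman lower bound for `g = p + q`. -/
lemma breg_lower (hC : ContDiff ℝ 2 p) (h0 : ∀ x, 0 ≤ deriv (deriv p) x) (a b : ℝ) :
    (p a + a^2/2) + (deriv p a + a) * (b - a) + (b-a)^2/2 ≤ p b + b^2/2 := by
  have := tangent_le (pc_d1 hC) (pc_mono1 hC h0) a b
  nlinarith [sq_nonneg (b - a)]

/-- Bregman upper bound for `g = p + q`. -/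
lemma breg_upper (hC : ContDiff ℝ 2 p) (h0 : ∀ x, 0 ≤ deriv (deriv p) x)
    (h2 : ∀ x, deriv (deriv p) x ≤ m₂) (a b : ℝ) :
    p b + b^2/2 ≤ (p a + a^2/2) + (deriv p a + a) * (b - a) + (1+m₂)*(b-a)^2/2 := by
  set F : ℝ → ℝ := fun y => m₂ * y^2/2 - p y with hF
  have hdF : ∀ y, HasDerivAt F (m₂ * y - deriv p y) y := by
    intro y
    have h1 : HasDerivAt (fun y : ℝ => m₂ * y^2/2) (m₂ * y) y := by
      have := ((hasDerivAt_pow 2 y).const_mul m₂).div_const 2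
      exact this.congr_deriv (by push_cast; ring)
    exact h1.sub (pc_d1 hC y).hasDerivAt
  have hdiff : Differentiable ℝ F := fun y => (hdF y).differentiableAt
  have hderiv : deriv F = fun y => m₂ * y - deriv p y := funext fun y => (hdF y).deriv
  have hmono : Monotone (deriv F) := by
    rw [hderiv]
    intro a b hab
    have := pc_lip1 hC h2 a b hab
    dsimp only
    nlinarith
  have := tangent_le hdiff hmono a b
  rw [hderiv] at this
  simp only [hF] at this
  nlinarith

/-- the derivative map `Dp y = p' y + y` expands distances -/
lemma Dp_expand (hC : ContDiff ℝ 2 p) (h0 : ∀ x, 0 ≤ deriv (deriv p) x)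
    {a b : ℝ} (hab : a ≤ b) : (b - a) ≤ (deriv p b + b) - (deriv p a + a) := by
  have := pc_mono1 hC h0 hab
  linarith

lemma Dp_lip (hC : ContDiff ℝ 2 p) (h0 : ∀ x, 0 ≤ deriv (deriv p) x)
    (h2 : ∀ x, deriv (deriv p) x ≤ m₂) (a b : ℝ) :
    |(deriv p b + b) - (deriv p a + a)| ≤ (1 + m₂) * |b - a| := by
  rcases le_total a b with hab | hab
  · have h1 := pc_lip1 hC h2 a b hab
    have h2' := pc_mono1 hC h0 hab
    rw [abs_of_nonneg (by linarith), abs_of_nonneg (by linarith)]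
    nlinarith
  · have h1 := pc_lip1 hC h2 b a hab
    have h2' := pc_mono1 hC h0 hab
    rw [abs_of_nonpos (by linarith), abs_of_nonpos (by linarith)]
    nlinarith

lemma Dp_strictMono (hC : ContDiff ℝ 2 p) (h0 : ∀ x, 0 ≤ deriv (deriv p) x) :
    StrictMono (fun y => deriv p y + y) := by
  intro a b hab
  have := pc_mono1 hC h0 hab.le
  dsimp only; linarith

lemma Dp_surj (hC : ContDiff ℝ 2 p) (h0 : ∀ x, 0 ≤ deriv (deriv p) x) :
    Function.Surjective (fun y => deriv p y + y) := by
  intro t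
  set D : ℝ → ℝ := fun y => deriv p y + y with hD
  have hcont : Continuous D := ((pc_d2 hC).continuous).add continuous_id
  set a : ℝ := min 0 (t - D 0) with ha
  set b : ℝ := max 0 (t - D 0) with hb
  have hab : a ≤ b := le_trans (min_le_left _ _) (le_max_left _ _)
  have hDa : D a ≤ t := by
    have h1 : a ≤ 0 := min_le_left _ _
    have h2 := Dp_expand hC h0 h1
    have h3 : a ≤ t - (deriv p 0 + 0) := min_le_right _ _
    simp only [hD] at h2 ⊢
    linarith
  have hDb : t ≤ D b := by
    have h1 : (0:ℝ) ≤ b := le_max_left _ _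
    have h2 := Dp_expand hC h0 h1
    have h3 : t - (deriv p 0 + 0) ≤ b := le_max_right _ _
    simp only [hD] at h2 ⊢
    linarith
  have : t ∈ Set.Icc (D a) (D b) := ⟨hDa, hDb⟩
  obtain ⟨c, _, hc⟩ := intermediate_value_Icc hab hcont.continuousOn this
  exact ⟨c, hc⟩

end Single

section Tuple
open Function Set
variable {k : ℕ} {m₀ m₁ m₂ m₃ : ℝ} {h : Fin k → ℝ → ℝ}

-- abbreviations
def gq (h : Fin k → ℝ → ℝ) (i : Fin k) (y : ℝ) : ℝ := h i y + y^2/2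

lemma hfun_eq (x : Fin k → ℝ) : Hfun h x = (∑ i, gq h i (x i)) - (sCoord x)^2/2 := by
  have hgq : ∑ i, gq h i (x i) = (∑ i, h i (x i)) + (∑ i, (x i)^2)/2 := by
    simp only [gq, Finset.sum_add_distrib, Finset.sum_div]
  rw [Hfun, cCost_eq, hgq]
  ring

lemma hmC (hmem : ∀ i, h i ∈ Cm m₀ m₁ m₂ m₃) (i : Fin k) : ContDiff ℝ 2 (h i) := (hmem i).1
lemma hm0 (hmem : ∀ i, h i ∈ Cm m₀ m₁ m₂ m₃) (i : Fin k) : ∀ x, 0 ≤ deriv (deriv (h i)) x := fun x => ((hmem i).2.2.2.1 x).1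
lemma hm2 (hmem : ∀ i, h i ∈ Cm m₀ m₁ m₂ m₃) (i : Fin k) : ∀ x, deriv (deriv (h i)) x ≤ m₂ := fun x => ((hmem i).2.2.2.1 x).2

/-- `D_i (γ_i t) = t`. -/
lemma curve_rightInv (hmem : ∀ i, h i ∈ Cm m₀ m₁ m₂ m₃) (i : Fin k) (t : ℝ) :
    deriv (h i) (curveOf h t i) + curveOf h t i = t := by
  have := Function.rightInverse_invFun (Dp_surj (hmC hmem i) (hm0 hmem i)) t
  exact this

lemma curve_mono (hmem : ∀ i, h i ∈ Cm m₀ m₁ m₂ m₃) (i : Fin k) {t t' : ℝ} (htt : t ≤ t') :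
    curveOf h t i ≤ curveOf h t' i := by
  by_contra hcon
  push_neg at hcon
  have := Dp_strictMono (hmC hmem i) (hm0 hmem i) hcon
  simp only at this
  rw [curve_rightInv hmem, curve_rightInv hmem] at this
  linarith

lemma curve_lip (hmem : ∀ i, h i ∈ Cm m₀ m₁ m₂ m₃) (i : Fin k) (t t' : ℝ) :
    |curveOf h t i - curveOf h t' i| ≤ |t - t'| := by
  rcases le_total t t' with htt | htt
  · have h1 := curve_mono hmem i htt
    have h2 := Dp_expand (hmC hmem i) (hm0 hmem i) h1
    rw [curve_rightInv hmem, curve_rightInv hmem] at h2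
    rw [abs_sub_comm, abs_of_nonneg (by linarith), abs_sub_comm t, abs_of_nonneg (by linarith)]
    linarith
  · have h1 := curve_mono hmem i htt
    have h2 := Dp_expand (hmC hmem i) (hm0 hmem i) h1
    rw [curve_rightInv hmem, curve_rightInv hmem] at h2
    rw [abs_of_nonneg (by linarith), abs_of_nonneg (by linarith)]
    linarith

lemma curve_cont (hmem : ∀ i, h i ∈ Cm m₀ m₁ m₂ m₃) (i : Fin k) : Continuous (fun t => curveOf h t i) := by
  apply LipschitzWith.continuous (K := 1)
  apply LipschitzWith.of_dist_le_mul
  intro t t'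
  rw [Real.dist_eq, Real.dist_eq]
  simpa using curve_lip hmem i t t'

lemma conj_nonneg (hconj : CConjugateTuple h) (hk : 0 < k) (x : Fin k → ℝ) : 0 ≤ Hfun h x := by
  set i0 : Fin k := ⟨0, hk⟩
  have hub := (hconj i0 (x i0)).1 ⟨x, rfl, rfl⟩
  have hsum : ∑ j, h j (x j) = (∑ j ∈ Finset.univ.erase i0, h j (x j)) + h i0 (x i0) :=
    (Finset.sum_erase_add _ _ (Finset.mem_univ i0)).symm
  rw [Hfun, hsum]
  linarith

lemma conj_almost (hconj : CConjugateTuple h) (i : Fin k) (t : ℝ) {ε : ℝ} (hε : 0 < ε) :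
    ∃ x : Fin k → ℝ, x i = t ∧ Hfun h x < ε := by
  obtain ⟨v, hv, hlt⟩ := (hconj i t).exists_between (show h i t - ε < h i t from by linarith)
  obtain ⟨x, hxi, hxv⟩ := hv
  refine ⟨x, hxi, ?_⟩
  have hsum : ∑ j, h j (x j) = (∑ j ∈ Finset.univ.erase i, h j (x j)) + h i (x i) :=
    (Finset.sum_erase_add _ _ (Finset.mem_univ i)).symm
  rw [Hfun, hsum, hxi]
  have h2 := hlt.1
  rw [hxv] at h2
  linarith


/-- Bregman-sum lower bound (F3). -/
lemma F3 (hmem : ∀ i, h i ∈ Cm m₀ m₁ m₂ m₃) (x : Fin k → ℝ) :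
    Hfun h (curveOf h (sCoord x)) + (sCoord (curveOf h (sCoord x)) - sCoord x)^2/2
      + (∑ i, (x i - curveOf h (sCoord x) i)^2)/2 ≤ Hfun h x := by
  set s := sCoord x with hs
  set γ := curveOf h s with hγ
  have hbr : ∀ i, gq h i (γ i) + s * (x i - γ i) + (x i - γ i)^2/2 ≤ gq h i (x i) := by
    intro i
    have hble := breg_lower (hmC hmem i) (hm0 hmem i) (γ i) (x i)
    have hri : deriv (h i) (γ i) + γ i = s := curve_rightInv hmem i s
    simp only [gq]
    rw [hri] at hble
    linarith
  have hsum : (∑ i, gq h i (γ i)) + s * (s - sCoord γ) + (∑ i, (x i - γ i)^2)/2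
      ≤ ∑ i, gq h i (x i) := by
    have h1 := Finset.sum_le_sum (fun i (_ : i ∈ Finset.univ) => hbr i)
    rw [Finset.sum_add_distrib, Finset.sum_add_distrib, ← Finset.mul_sum, ← Finset.sum_div] at h1
    have h2 : ∑ i, (x i - γ i) = s - sCoord γ := by
      rw [Finset.sum_sub_distrib]; rfl
    rw [h2] at h1
    linarith
  rw [hfun_eq, hfun_eq]
  have : sCoord γ = ∑ i, γ i := rfl
  nlinarith [hsum, sq_nonneg (sCoord γ - s)]

/-- key conjugacy identity: the curve lies in the zero set and `s(γ(τ)) = τ`. -/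
lemma curve_zero (hmem : ∀ i, h i ∈ Cm m₀ m₁ m₂ m₃) (hconj : CConjugateTuple h)
    (hk : 0 < k) (τ : ℝ) :
    Hfun h (curveOf h τ) = 0 ∧ sCoord (curveOf h τ) = τ := by
  set A : ℝ → ℝ := fun τ => Hfun h (curveOf h τ) + (sCoord (curveOf h τ) - τ)^2/2 with hA
  have hAnonneg : ∀ τ, 0 ≤ A τ := by
    intro τ
    have := conj_nonneg hconj hk (curveOf h τ)
    have := sq_nonneg (sCoord (curveOf h τ) - τ)
    simp only [hA]; positivity
  have hAcont : Continuous A := by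
    have hγc : ∀ i, Continuous (fun t => curveOf h t i) := curve_cont hmem
    have hsγ : Continuous (fun t => sCoord (curveOf h t)) := by
      simp only [sCoord]
      exact continuous_finset_sum _ (fun i _ => hγc i)
    have hgc : ∀ i : Fin k, Continuous (fun t => gq h i (curveOf h t i)) := by
      intro i
      exact ((((hmC hmem i).continuous).comp (hγc i)).add
        (((hγc i).pow 2).div_const 2))
    have hHc : Continuous (fun t => Hfun h (curveOf h t)) := by
      have : (fun t => Hfun h (curveOf h t)) =
          fun t => (∑ i, gq h i (curveOf h t i)) - (sCoord (curveOf h t))^2/2 := by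
        funext t; exact hfun_eq _
      rw [this]
      exact (continuous_finset_sum _ (fun i _ => hgc i)).sub ((hsγ.pow 2).div_const 2)
    exact hHc.add (((hsγ.sub continuous_id).pow 2).div_const 2)
  clear_value A
  -- the ε-argument
  set i0 : Fin k := ⟨0, hk⟩
  have key : ∀ τ : ℝ, A τ ≤ 0 := by
    intro τ
    -- for each n, find sₙ with A sₙ ≤ 1/(n+1) and |sₙ - τ| ≤ (1+m₂) * √(2/(n+1))
    have hstep : ∀ n : ℕ, ∃ s' : ℝ, A s' < 1/(n+1) ∧
        |s' - τ| ≤ (1+m₂) * Real.sqrt (2/(n+1)) := by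
      intro n
      have hεpos : (0:ℝ) < 1/(n+1) := by positivity
      obtain ⟨x, hxi, hxlt⟩ := conj_almost hconj i0 (curveOf h τ i0) hεpos
      set s' := sCoord x with hs'
      clear_value s'
      have hF3 := F3 hmem x
      have hAle : A s' ≤ Hfun h x - (∑ i, (x i - curveOf h s' i)^2)/2 := by
        simp only [hA]; rw [← hs'] at hF3; linarith
      have hterm : (x i0 - curveOf h s' i0)^2 ≤ ∑ i, (x i - curveOf h s' i)^2 :=
        Finset.single_le_sum (f := fun i => (x i - curveOf h s' i)^2)
          (fun i _ => sq_nonneg _) (Finset.mem_univ i0)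
      have hAle' : A s' < 1/(n+1) := by
        have h0 := hAnonneg s'
        nlinarith [hF3, hxlt, hterm]
      refine ⟨s', hAle', ?_⟩
      -- |γ τ i0 - γ s' i0| ≤ √(2/(n+1))
      have hsq : (curveOf h τ i0 - curveOf h s' i0)^2 ≤ 2/(n+1) := by
        have h0 := hAnonneg s'
        rw [hxi] at hterm
        have h21 : (2:ℝ)/(n+1) = 2*(1/(n+1)) := by ring
        have hSig : ∑ i, (x i - curveOf h s' i)^2 < 2/(n+1) := by
          rw [h21]; linarith
        linarith
      have habs : |curveOf h τ i0 - curveOf h s' i0| ≤ Real.sqrt (2/(n+1)) := by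
        rw [← Real.sqrt_sq_eq_abs]
        exact Real.sqrt_le_sqrt hsq
      have hlip := Dp_lip (hmC hmem i0) (hm0 hmem i0) (hm2 hmem i0)
        (curveOf h τ i0) (curveOf h s' i0)
      rw [curve_rightInv hmem, curve_rightInv hmem] at hlip
      have h1m : (0:ℝ) ≤ 1 + m₂ := by
        have := hm2 hmem i0 0
        have := hm0 hmem i0 0
        linarith
      calc |s' - τ| ≤ (1+m₂) * |curveOf h s' i0 - curveOf h τ i0| := hlip
        _ = (1+m₂) * |curveOf h τ i0 - curveOf h s' i0| := by rw [abs_sub_comm]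
        _ ≤ (1+m₂) * Real.sqrt (2/(n+1)) := by
            exact mul_le_mul_of_nonneg_left habs h1m
    choose seq hseq1 hseq2 using hstep
    have hden : Filter.Tendsto (fun n : ℕ => (n:ℝ)+1) Filter.atTop Filter.atTop :=
      Filter.tendsto_atTop_add_const_right _ 1 tendsto_natCast_atTop_atTop
    have h2 : Filter.Tendsto (fun n : ℕ => (2:ℝ)/(n+1)) Filter.atTop (nhds 0) :=
      Filter.Tendsto.div_atTop tendsto_const_nhds hden
    have h3 : Filter.Tendsto (fun n : ℕ => Real.sqrt (2/(n+1))) Filter.atTop (nhds 0) := by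
      have h4 := (Real.continuous_sqrt.tendsto 0).comp h2
      simp only [Function.comp_def, Real.sqrt_zero] at h4
      exact h4
    have hb : Filter.Tendsto (fun n : ℕ => (1+m₂) * Real.sqrt (2/(n+1)))
        Filter.atTop (nhds 0) := by
      simpa using h3.const_mul (1+m₂)
    have hto : Filter.Tendsto seq Filter.atTop (nhds τ) := by
      rw [tendsto_iff_dist_tendsto_zero]
      exact squeeze_zero (fun n => dist_nonneg)
        (fun n => by rw [Real.dist_eq]; exact hseq2 n) hb
    have hAto : Filter.Tendsto (fun n => A (seq n)) Filter.atTop (nhds (A τ)) :=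
      (hAcont.tendsto τ).comp hto
    have hupper : Filter.Tendsto (fun n : ℕ => (1:ℝ)/(n+1)) Filter.atTop (nhds 0) :=
      Filter.Tendsto.div_atTop tendsto_const_nhds hden
    exact le_of_tendsto_of_tendsto hAto hupper
      (Filter.Eventually.of_forall (fun n => (hseq1 n).le))
  have hAzero : A τ = 0 := le_antisymm (key τ) (hAnonneg τ)
  have h1 := conj_nonneg hconj hk (curveOf h τ)
  have h2 := sq_nonneg (sCoord (curveOf h τ) - τ)
  constructor
  · simp only [hA] at hAzero; nlinarith
  · simp only [hA] at hAzero; nlinarith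

/-- Lemma B: quadratic lower bound for `H`. -/
lemma lemB (hmem : ∀ i, h i ∈ Cm m₀ m₁ m₂ m₃) (hconj : CConjugateTuple h)
    (hk : 0 < k) (x : Fin k → ℝ) :
    ∑ i, (x i - curveOf h (sCoord x) i)^2 ≤ 2 * Hfun h x := by
  have h1 := F3 hmem x
  obtain ⟨h2, h3⟩ := curve_zero hmem hconj hk (sCoord x)
  rw [h2, h3] at h1
  nlinarith [h1]

/-- Lemma U: zeros of `H` lie on the curve. -/
lemma lemU (hmem : ∀ i, h i ∈ Cm m₀ m₁ m₂ m₃) (hconj : CConjugateTuple h)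
    (hk : 0 < k) (u : Fin k → ℝ) (hu : Hfun h u = 0) (i : Fin k) :
    u i = curveOf h (sCoord u) i := by
  have h1 := lemB hmem hconj hk u
  rw [hu] at h1
  have h2 : ∀ j ∈ Finset.univ, (0:ℝ) ≤ (u j - curveOf h (sCoord u) j)^2 :=
    fun j _ => sq_nonneg _
  have h3 := (Finset.sum_eq_zero_iff_of_nonneg h2).mp
    (le_antisymm (by linarith) (Finset.sum_nonneg h2))
  have h4 := h3 i (Finset.mem_univ i)
  have := pow_eq_zero_iff (n := 2) (by norm_num) |>.mp h4
  linarith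

/-- Lemma C: quadratic upper bound for `H` off the zero set. -/
lemma lemC (hmem : ∀ i, h i ∈ Cm m₀ m₁ m₂ m₃) (hconj : CConjugateTuple h)
    (hk : 0 < k) (u r : Fin k → ℝ) (hu : Hfun h u = 0) :
    Hfun h (fun i => u i + r i) ≤ (1+m₂)/2 * (∑ i, (r i)^2) - (sCoord r)^2/2 := by
  have hDu : ∀ i, deriv (h i) (u i) + u i = sCoord u := by
    intro i
    have h1 := lemU hmem hconj hk u hu i
    have h2 := curve_rightInv hmem i (sCoord u)
    rw [← h1] at h2
    exact h2
  have hbr : ∀ i, gq h i (u i + r i) ≤ gq h i (u i) + sCoord u * r i + (1+m₂)/2 * (r i)^2 := by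
    intro i
    have := breg_upper (hmC hmem i) (hm0 hmem i) (hm2 hmem i) (u i) (u i + r i)
    simp only [gq]
    rw [hDu i] at this
    nlinarith [this]
  have hsum := Finset.sum_le_sum (fun i (_ : i ∈ Finset.univ) => hbr i)
  rw [Finset.sum_add_distrib, Finset.sum_add_distrib, ← Finset.mul_sum, ← Finset.mul_sum] at hsum
  have hsC : sCoord (fun i => u i + r i) = sCoord u + sCoord r := by
    simp only [sCoord]; rw [Finset.sum_add_distrib]
  have hsr : sCoord r = ∑ i, r i := rfl
  rw [hfun_eq] at hu ⊢
  rw [hsC, hsr] at *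
  nlinarith [hsum]

/-- Lemma D: the curve is a 1-Lipschitz map into `ℝ^k`. -/
lemma lemD (hmem : ∀ i, h i ∈ Cm m₀ m₁ m₂ m₃) (hconj : CConjugateTuple h)
    (hk : 0 < k) (t t' : ℝ) :
    ∑ i, (curveOf h t i - curveOf h t' i)^2 ≤ (t - t')^2 := by
  -- wlog t' ≤ t
  rcases le_total t' t with htt | htt
  · have hmono : ∀ i, curveOf h t' i ≤ curveOf h t i := fun i => curve_mono hmem i htt
    have hsum : ∑ i, (curveOf h t i - curveOf h t' i) = t - t' := by
      rw [Finset.sum_sub_distrib]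
      have h1 := (curve_zero hmem hconj hk t).2
      have h2 := (curve_zero hmem hconj hk t').2
      simp only [sCoord] at h1 h2
      rw [h1, h2]
    have hle : ∀ i ∈ Finset.univ, (curveOf h t i - curveOf h t' i)^2 ≤
        (curveOf h t i - curveOf h t' i) * (t - t') := by
      intro i _
      rw [sq]
      apply mul_le_mul_of_nonneg_left _ (by linarith [hmono i])
      rw [← hsum]
      exact Finset.single_le_sum (f := fun j => curveOf h t j - curveOf h t' j)
        (fun j _ => by simpa using sub_nonneg.mpr (hmono j)) (Finset.mem_univ i)
    calc ∑ i, (curveOf h t i - curveOf h t' i)^2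
        ≤ ∑ i, (curveOf h t i - curveOf h t' i) * (t - t') := Finset.sum_le_sum hle
      _ = (t - t')^2 := by rw [← Finset.sum_mul, hsum, sq]
  · have hmono : ∀ i, curveOf h t i ≤ curveOf h t' i := fun i => curve_mono hmem i htt
    have hsum : ∑ i, (curveOf h t' i - curveOf h t i) = t' - t := by
      rw [Finset.sum_sub_distrib]
      have h1 := (curve_zero hmem hconj hk t).2
      have h2 := (curve_zero hmem hconj hk t').2
      simp only [sCoord] at h1 h2
      rw [h1, h2]
    have hle : ∀ i ∈ Finset.univ, (curveOf h t i - curveOf h t' i)^2 ≤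
        (curveOf h t' i - curveOf h t i) * (t' - t) := by
      intro i _
      have : (curveOf h t i - curveOf h t' i)^2 = (curveOf h t' i - curveOf h t i)^2 := by ring
      rw [this, sq]
      apply mul_le_mul_of_nonneg_left _ (by linarith [hmono i])
      rw [← hsum]
      exact Finset.single_le_sum (f := fun j => curveOf h t' j - curveOf h t j)
        (fun j _ => by simpa using sub_nonneg.mpr (hmono j)) (Finset.mem_univ i)
    calc ∑ i, (curveOf h t i - curveOf h t' i)^2
        ≤ ∑ i, (curveOf h t' i - curveOf h t i) * (t' - t) := Finset.sum_le_sum hle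
      _ = (t' - t)^2 := by rw [← Finset.sum_mul, hsum, sq]
      _ = (t - t')^2 := by ring

end Tuple

/-- (Dimension-free expected empirical MSE bound.) Under the hypotheses
of the empirical error theorem, if moreover the noise components are mutually
uncorrelated (`E[R_i R_j] = 0` for `i ≠ j`), then the expected empirical mean squared
error of the curve estimate is at most `(32λ + 2m₂ + 8)/(2λ + 1) · E‖R‖²`,
a bound not depending on the dimension `k`. -/
theorem expected_empirical_mse_bound_uncorrelated
    (k n : ℕ) (hk : 2 ≤ k) (hn : 0 < n)
    (lam : ℝ) (hlam : 0 ≤ lam)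
    (m₀ m₁ m₂ m₃ : ℝ) (hm₀ : 0 ≤ m₀) (hm₁ : 0 ≤ m₁) (hm₂ : 0 ≤ m₂) (hm₃ : 0 ≤ m₃)
    (f : Fin k → ℝ → ℝ) (hf : ∀ i, f i ∈ Cm m₀ m₁ m₂ m₃) (hconj : CConjugateTuple f)
    {Ω : Type*} [MeasurableSpace Ω] (μ : Measure Ω) [IsProbabilityMeasure μ]
    (U R : Ω → Fin k → ℝ)
    (hUmeas : Measurable U) (hRmeas : Measurable R)
    (hindep : IndepFun U R μ)
    (hUΓ : ∀ᵐ ω ∂μ, Hfun f (U ω) = 0)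
    (hRint : ∀ i, Integrable (fun ω => R ω i) μ)
    (hRmean : ∀ i, ∫ ω, R ω i ∂μ = 0)
    (hX2 : Integrable (fun ω => ∑ i, (U ω i + R ω i) ^ 2) μ)
    (hR2 : Integrable (fun ω => ∑ i, (R ω i) ^ 2) μ)
    (hRuncorr : ∀ i j : Fin k, i ≠ j → ∫ ω, R ω i * R ω j ∂μ = 0)
    (X : Fin n → Ω → Fin k → ℝ)
    (hXmeas : ∀ m, Measurable (X m))
    (hXindep : iIndepFun X μ)
    (hXdist : ∀ m, IdentDistrib (X m) (fun ω => U ω + R ω) μ μ)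
    (fhat : Ω → Fin k → ℝ → ℝ)
    (hfhat : ∀ᵐ ω ∂μ,
      (∀ i, fhat ω i ∈ Cm m₀ m₁ m₂ m₃) ∧ CConjugateTuple (fhat ω) ∧
      ∀ h : Fin k → ℝ → ℝ, (∀ i, h i ∈ Cm m₀ m₁ m₂ m₃) → CConjugateTuple h →
        empObj n lam (fun m => X m ω) (fhat ω) ≤ empObj n lam (fun m => X m ω) h)
    (hMSEint : Integrable (fun ω => (n : ℝ)⁻¹ * ∑ m : Fin n, ∑ i,
      (curveOf f (sCoord (X m ω)) i - curveOf (fhat ω) (sCoord (X m ω)) i) ^ 2) μ) :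
    ∫ ω, (n : ℝ)⁻¹ * ∑ m : Fin n, ∑ i,
        (curveOf f (sCoord (X m ω)) i - curveOf (fhat ω) (sCoord (X m ω)) i) ^ 2 ∂μ ≤
      (32 * lam + 2 * m₂ + 8) / (2 * lam + 1) *
        ∫ ω, ∑ i, (R ω i) ^ 2 ∂μ := by
  have hkpos : 0 < k := by omega
  have hden : (0:ℝ) < 2 * lam + 1 := by linarith
  set ρ : ℝ := ∫ ω, ∑ i, (R ω i) ^ 2 ∂μ with hρ
  clear_value ρ
  -- the two statistics
  set φ₁ : (Fin k → ℝ) → ℝ := fun x => ∑ i, (x i - curveOf f (sCoord x) i)^2 with hφ₁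
  set φ₂ : (Fin k → ℝ) → ℝ := fun x => Hfun f x with hφ₂
  -- continuity and measurability
  have hscont : Continuous (sCoord : (Fin k → ℝ) → ℝ) := by
    have hrw : (sCoord : (Fin k → ℝ) → ℝ) = fun x => ∑ i, x i := rfl
    rw [hrw]
    exact continuous_finset_sum _ (fun i _ => continuous_apply i)
  have hγcont : ∀ i, Continuous (fun x : Fin k → ℝ => curveOf f (sCoord x) i) :=
    fun i => (curve_cont hf i).comp hscont
  have hφ₁cont : Continuous φ₁ := by
    apply continuous_finset_sum
    intro i _
    exact ((continuous_apply i).sub (hγcont i)).pow 2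
  have hφ₂cont : Continuous φ₂ := by
    have : φ₂ = fun x => (∑ i, gq f i (x i)) - (sCoord x)^2/2 := by
      funext x; exact hfun_eq x
    rw [this]
    apply Continuous.sub
    · exact continuous_finset_sum _ (fun i _ =>
        (((hmC hf i).continuous).comp (continuous_apply i)).add
          (((continuous_apply i).pow 2).div_const 2))
    · exact (hscont.pow 2).div_const 2
  have hφ₁meas : Measurable φ₁ := hφ₁cont.measurable
  have hφ₂meas : Measurable φ₂ := hφ₂cont.measurable
  -- noise moment computations
  have hRi : ∀ i, Measurable (fun ω => R ω i) := fun i => (measurable_pi_apply i).comp hRmeas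
  have hRi2int : ∀ i, Integrable (fun ω => (R ω i)^2) μ := by
    intro i
    apply Integrable.mono' hR2 (((hRi i).pow_const 2).aestronglyMeasurable)
    filter_upwards with ω
    rw [Real.norm_eq_abs, abs_of_nonneg (sq_nonneg _)]
    exact Finset.single_le_sum (f := fun j => (R ω j)^2) (fun j _ => sq_nonneg _)
      (Finset.mem_univ i)
  have hRijint : ∀ i j : Fin k, Integrable (fun ω => R ω i * R ω j) μ := by
    intro i j
    apply Integrable.mono' hR2 (((hRi i).mul (hRi j)).aestronglyMeasurable)
    filter_upwards with ω
    rw [Real.norm_eq_abs]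
    have h1 : |R ω i * R ω j| ≤ ((R ω i)^2 + (R ω j)^2)/2 := by
      rw [abs_mul]
      nlinarith [sq_nonneg (|R ω i| - |R ω j|), sq_abs (R ω i), sq_abs (R ω j),
        abs_nonneg (R ω i), abs_nonneg (R ω j)]
    have h2 : (R ω i)^2 ≤ ∑ l, (R ω l)^2 :=
      Finset.single_le_sum (f := fun l => (R ω l)^2) (fun l _ => sq_nonneg _)
        (Finset.mem_univ i)
    have h3 : (R ω j)^2 ≤ ∑ l, (R ω l)^2 :=
      Finset.single_le_sum (f := fun l => (R ω l)^2) (fun l _ => sq_nonneg _)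
        (Finset.mem_univ j)
    exact h1.trans (by linarith)
  have hsRsq : ∀ ω, (sCoord (R ω))^2 = ∑ i, ∑ j, R ω i * R ω j := by
    intro ω
    rw [sCoord, sq, Finset.sum_mul_sum]
  have hs2int : Integrable (fun ω => (sCoord (R ω))^2) μ := by
    have : (fun ω => (sCoord (R ω))^2) = fun ω => ∑ i, ∑ j, R ω i * R ω j :=
      funext hsRsq
    rw [this]
    exact integrable_finset_sum _ (fun i _ => integrable_finset_sum _ (fun j _ => hRijint i j))
  have hEs2 : ∫ ω, (sCoord (R ω))^2 ∂μ = ρ := by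
    have h1 : ∫ ω, (sCoord (R ω))^2 ∂μ = ∑ i, ∑ j, ∫ ω, R ω i * R ω j ∂μ := by
      rw [show (fun ω => (sCoord (R ω))^2) = fun ω => ∑ i, ∑ j, R ω i * R ω j from funext hsRsq]
      rw [integral_finset_sum _ (fun i _ => integrable_finset_sum _ (fun j _ => hRijint i j))]
      congr 1
      funext i
      exact integral_finset_sum _ (fun j _ => hRijint i j)
    rw [h1, hρ]
    rw [integral_finset_sum _ (fun i _ => hRi2int i)]
    apply Finset.sum_congr rfl
    intro i _
    rw [Finset.sum_eq_single i]
    · congr 1; funext ω; ring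
    · intro j _ hji; exact hRuncorr i j (Ne.symm hji)
    · intro hi; exact absurd (Finset.mem_univ i) hi
  have hρ0 : 0 ≤ ρ := by
    rw [hρ]
    apply integral_nonneg
    intro ω
    exact Finset.sum_nonneg (fun i _ => sq_nonneg _)
  -- the reference variable Z = U + R
  set Z : Ω → Fin k → ℝ := fun ω => U ω + R ω with hZ
  have hZmeas : Measurable Z := hUmeas.add hRmeas
  have hZae2 : ∀ᵐ ω ∂μ, φ₂ (Z ω) ≤ (1+m₂)/2 * (∑ i, (R ω i)^2) - (sCoord (R ω))^2/2 := by
    filter_upwards [hUΓ] with ω hω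
    have := lemC hf hconj hkpos (U ω) (R ω) hω
    exact this
  have hZae1 : ∀ᵐ ω ∂μ, φ₁ (Z ω) ≤ 2 * (∑ i, (R ω i)^2) + 2 * (sCoord (R ω))^2 := by
    filter_upwards [hUΓ] with ω hω
    have hUcurve : ∀ i, U ω i = curveOf f (sCoord (U ω)) i := lemU hf hconj hkpos (U ω) hω
    have hsZ : sCoord (Z ω) = sCoord (U ω) + sCoord (R ω) := by
      simp only [hZ, sCoord, Pi.add_apply]
      exact Finset.sum_add_distrib
    have hD := lemD hf hconj hkpos (sCoord (U ω)) (sCoord (Z ω))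
    have hterm : ∀ i, (Z ω i - curveOf f (sCoord (Z ω)) i)^2 ≤
        2 * (R ω i)^2 + 2 * (curveOf f (sCoord (U ω)) i - curveOf f (sCoord (Z ω)) i)^2 := by
      intro i
      have hZi : Z ω i = U ω i + R ω i := rfl
      rw [hZi, hUcurve i]
      nlinarith [sq_nonneg (R ω i - (curveOf f (sCoord (U ω)) i - curveOf f (sCoord (Z ω)) i))]
    have hsum := Finset.sum_le_sum (fun i (_ : i ∈ Finset.univ) => hterm i)
    rw [Finset.sum_add_distrib, ← Finset.mul_sum, ← Finset.mul_sum] at hsum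
    have : (sCoord (U ω) - sCoord (Z ω))^2 = (sCoord (R ω))^2 := by rw [hsZ]; ring
    rw [this] at hD
    simp only [hφ₁]
    nlinarith [hsum, hD]
  have hφ₂Znonneg : ∀ ω, 0 ≤ φ₂ (Z ω) := fun ω => conj_nonneg hconj hkpos (Z ω)
  have hφ₁Znonneg : ∀ x, 0 ≤ φ₁ x := fun x => by
    rw [hφ₁]; exact Finset.sum_nonneg (fun i _ => sq_nonneg _)
  clear_value φ₁ φ₂ Z
  have hφ₂Zint : Integrable (fun ω => φ₂ (Z ω)) μ := by
    apply Integrable.mono' (hR2.const_mul ((1+m₂)/2)) ((hφ₂meas.comp hZmeas).aestronglyMeasurable)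
    filter_upwards [hZae2] with ω hω
    simp only [Function.comp_apply, Real.norm_eq_abs, abs_of_nonneg (hφ₂Znonneg ω)]
    have := sq_nonneg (sCoord (R ω))
    linarith
  have hφ₁Zint : Integrable (fun ω => φ₁ (Z ω)) μ := by
    apply Integrable.mono' ((hR2.const_mul 2).add (hs2int.const_mul 2))
      ((hφ₁meas.comp hZmeas).aestronglyMeasurable)
    filter_upwards [hZae1] with ω hω
    simp only [Function.comp_apply, Real.norm_eq_abs, abs_of_nonneg (hφ₁Znonneg _)]
    exact hω
  have hEφ₂Z : ∫ ω, φ₂ (Z ω) ∂μ ≤ m₂/2 * ρ := by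
    have h1 : ∫ ω, φ₂ (Z ω) ∂μ ≤
        ∫ ω, ((1+m₂)/2 * (∑ i, (R ω i)^2) - (sCoord (R ω))^2/2) ∂μ := by
      apply integral_mono_ae hφ₂Zint _ hZae2
      exact (hR2.const_mul ((1+m₂)/2)).sub (hs2int.div_const 2)
    rw [integral_sub (hR2.const_mul ((1+m₂)/2)) (hs2int.div_const 2)] at h1
    rw [integral_const_mul, integral_div, hEs2, ← hρ] at h1
    linarith
  have hEφ₁Z : ∫ ω, φ₁ (Z ω) ∂μ ≤ 4 * ρ := by
    have h1 : ∫ ω, φ₁ (Z ω) ∂μ ≤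
        ∫ ω, (2 * (∑ i, (R ω i)^2) + 2 * (sCoord (R ω))^2) ∂μ := by
      apply integral_mono_ae hφ₁Zint _ hZae1
      exact (hR2.const_mul 2).add (hs2int.const_mul 2)
    rw [integral_add (hR2.const_mul 2) (hs2int.const_mul 2), integral_const_mul,
      integral_const_mul, hEs2, ← hρ] at h1
    linarith
  -- transfer to the samples
  have hXid : ∀ m, IdentDistrib (fun ω => φ₁ (X m ω)) (fun ω => φ₁ (Z ω)) μ μ :=
    fun m => (hXdist m).comp hφ₁meas
  have hXid2 : ∀ m, IdentDistrib (fun ω => φ₂ (X m ω)) (fun ω => φ₂ (Z ω)) μ μ :=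
    fun m => (hXdist m).comp hφ₂meas
  have hφ₁Xint : ∀ m, Integrable (fun ω => φ₁ (X m ω)) μ :=
    fun m => (hXid m).integrable_iff.mpr hφ₁Zint
  have hφ₂Xint : ∀ m, Integrable (fun ω => φ₂ (X m ω)) μ :=
    fun m => (hXid2 m).integrable_iff.mpr hφ₂Zint
  have hEφ₁X : ∀ m, ∫ ω, φ₁ (X m ω) ∂μ ≤ 4 * ρ :=
    fun m => (hXid m).integral_eq ▸ hEφ₁Z
  have hEφ₂X : ∀ m, ∫ ω, φ₂ (X m ω) ∂μ ≤ m₂/2 * ρ :=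
    fun m => (hXid2 m).integral_eq ▸ hEφ₂Z
  -- the averaged statistics
  set F1 : Ω → ℝ := fun ω => (n:ℝ)⁻¹ * ∑ m : Fin n, φ₁ (X m ω) with hF1
  set F2 : Ω → ℝ := fun ω => (n:ℝ)⁻¹ * ∑ m : Fin n, φ₂ (X m ω) with hF2
  have hF1int : Integrable F1 μ :=
    (integrable_finset_sum _ (fun m _ => hφ₁Xint m)).const_mul _
  have hF2int : Integrable F2 μ :=
    (integrable_finset_sum _ (fun m _ => hφ₂Xint m)).const_mul _
  have hninv : (0:ℝ) ≤ (n:ℝ)⁻¹ := by positivity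
  have hEF1 : ∫ ω, F1 ω ∂μ ≤ 4 * ρ := by
    rw [hF1]
    rw [integral_const_mul, integral_finset_sum _ (fun m _ => hφ₁Xint m)]
    calc (n:ℝ)⁻¹ * ∑ m : Fin n, ∫ ω, φ₁ (X m ω) ∂μ
        ≤ (n:ℝ)⁻¹ * ∑ m : Fin n, (4 * ρ) := by
          apply mul_le_mul_of_nonneg_left _ hninv
          exact Finset.sum_le_sum (fun m _ => hEφ₁X m)
      _ = (n:ℝ)⁻¹ * (n * (4 * ρ)) := by rw [Finset.sum_const, Finset.card_univ,
          Fintype.card_fin, nsmul_eq_mul]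
      _ = 4 * ρ := by
          field_simp
  have hEF2 : ∫ ω, F2 ω ∂μ ≤ m₂/2 * ρ := by
    rw [hF2]
    rw [integral_const_mul, integral_finset_sum _ (fun m _ => hφ₂Xint m)]
    calc (n:ℝ)⁻¹ * ∑ m : Fin n, ∫ ω, φ₂ (X m ω) ∂μ
        ≤ (n:ℝ)⁻¹ * ∑ m : Fin n, (m₂/2 * ρ) := by
          apply mul_le_mul_of_nonneg_left _ hninv
          exact Finset.sum_le_sum (fun m _ => hEφ₂X m)
      _ = (n:ℝ)⁻¹ * (n * (m₂/2 * ρ)) := by rw [Finset.sum_const, Finset.card_univ,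
          Fintype.card_fin, nsmul_eq_mul]
      _ = m₂/2 * ρ := by field_simp
  -- pathwise bound
  set B : Ω → ℝ := fun ω => (2*lam+1)⁻¹ * ((8*lam+2) * F1 ω + 4 * F2 ω) with hB
  have hBint : Integrable B μ :=
    ((hF1int.const_mul _).add (hF2int.const_mul _)).const_mul _
  clear_value F1 F2 B
  have hpath : ∀ᵐ ω ∂μ, (n : ℝ)⁻¹ * ∑ m : Fin n, ∑ i,
      (curveOf f (sCoord (X m ω)) i - curveOf (fhat ω) (sCoord (X m ω)) i) ^ 2 ≤ B ω := by
    filter_upwards [hfhat] with ω hω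
    obtain ⟨hmemhat, hconjhat, hmin⟩ := hω
    have hYψ : ∀ m, ∑ i, (X m ω i - curveOf (fhat ω) (sCoord (X m ω)) i)^2 ≤
        2 * Hfun (fhat ω) (X m ω) :=
      fun m => lemB hmemhat hconjhat hkpos (X m ω)
    set Mv : ℝ := (n : ℝ)⁻¹ * ∑ m : Fin n, ∑ i,
      (curveOf f (sCoord (X m ω)) i - curveOf (fhat ω) (sCoord (X m ω)) i) ^ 2 with hMv
    set bψ : ℝ := (n : ℝ)⁻¹ * ∑ m : Fin n, ∑ i,
      (X m ω i - curveOf (fhat ω) (sCoord (X m ω)) i)^2 with hbψ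
    clear_value Mv bψ
    have hbnn : 0 ≤ bψ := by
      rw [hbψ]
      exact mul_nonneg hninv (Finset.sum_nonneg
        (fun m _ => Finset.sum_nonneg (fun i _ => sq_nonneg _)))
    have hF1nn : 0 ≤ F1 ω := by
      rw [hF1]
      exact mul_nonneg hninv (Finset.sum_nonneg (fun m _ => hφ₁Znonneg _))
    -- fact 1 : Mv ≤ 2 F1 + 2 bψ
    have hM : Mv ≤ 2 * F1 ω + 2 * bψ := by
      have hterm : ∀ m ∈ Finset.univ, ∑ i,
          (curveOf f (sCoord (X m ω)) i - curveOf (fhat ω) (sCoord (X m ω)) i)^2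
          ≤ 2 * φ₁ (X m ω) + 2 * ∑ i, (X m ω i - curveOf (fhat ω) (sCoord (X m ω)) i)^2 := by
        intro m _
        have hii : ∀ i ∈ Finset.univ,
            (curveOf f (sCoord (X m ω)) i - curveOf (fhat ω) (sCoord (X m ω)) i)^2 ≤
            2 * (X m ω i - curveOf f (sCoord (X m ω)) i)^2 +
            2 * (X m ω i - curveOf (fhat ω) (sCoord (X m ω)) i)^2 := by
          intro i _
          nlinarith only [sq_nonneg ((X m ω i - curveOf f (sCoord (X m ω)) i) +
              (X m ω i - curveOf (fhat ω) (sCoord (X m ω)) i)),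
            sq_nonneg ((X m ω i - curveOf f (sCoord (X m ω)) i) -
              (X m ω i - curveOf (fhat ω) (sCoord (X m ω)) i))]
        have h5 := Finset.sum_le_sum hii
        rw [Finset.sum_add_distrib, ← Finset.mul_sum, ← Finset.mul_sum] at h5
        simpa [hφ₁] using h5
      have hsum := Finset.sum_le_sum hterm
      rw [Finset.sum_add_distrib, ← Finset.mul_sum, ← Finset.mul_sum] at hsum
      have h6 := mul_le_mul_of_nonneg_left hsum hninv
      rw [hMv, hF1, hbψ]
      calc (n : ℝ)⁻¹ * ∑ m : Fin n, ∑ i,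
          (curveOf f (sCoord (X m ω)) i - curveOf (fhat ω) (sCoord (X m ω)) i) ^ 2
          ≤ (n:ℝ)⁻¹ * (2 * ∑ m : Fin n, φ₁ (X m ω) +
            2 * ∑ m : Fin n, ∑ i, (X m ω i - curveOf (fhat ω) (sCoord (X m ω)) i)^2) := h6
        _ = 2 * ((n:ℝ)⁻¹ * ∑ m : Fin n, φ₁ (X m ω)) +
            2 * ((n:ℝ)⁻¹ * ∑ m : Fin n, ∑ i,
              (X m ω i - curveOf (fhat ω) (sCoord (X m ω)) i)^2) := by ring
    -- fact 2 : (2 lam + 1) bψ ≤ 2 F2 + 2 lam F1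
    have hbb : (2*lam+1) * bψ ≤ 2 * F2 ω + 2 * lam * F1 ω := by
      have h1 : (lam + 1/2) * bψ ≤ empObj n lam (fun m => X m ω) (fhat ω) := by
        have e : empObj n lam (fun m => X m ω) (fhat ω) = (n:ℝ)⁻¹ * ∑ m : Fin n,
            (Hfun (fhat ω) (X m ω) + lam * ∑ i,
              (X m ω i - curveOf (fhat ω) (sCoord (X m ω)) i)^2) := rfl
        have hcomp : ∀ m ∈ Finset.univ, (lam + 1/2) *
            (∑ i, (X m ω i - curveOf (fhat ω) (sCoord (X m ω)) i)^2) ≤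
            Hfun (fhat ω) (X m ω) + lam * ∑ i,
              (X m ω i - curveOf (fhat ω) (sCoord (X m ω)) i)^2 := by
          intro m _
          nlinarith only [hYψ m, hlam, Finset.sum_nonneg (fun i (_ : i ∈ Finset.univ) =>
            sq_nonneg (X m ω i - curveOf (fhat ω) (sCoord (X m ω)) i))]
        rw [e, hbψ]
        calc (lam + 1/2) * ((n:ℝ)⁻¹ * ∑ m : Fin n, ∑ i,
            (X m ω i - curveOf (fhat ω) (sCoord (X m ω)) i)^2)
            = (n:ℝ)⁻¹ * ∑ m : Fin n, ((lam + 1/2) * ∑ i,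
              (X m ω i - curveOf (fhat ω) (sCoord (X m ω)) i)^2) := by
              rw [← Finset.mul_sum]; ring
          _ ≤ (n:ℝ)⁻¹ * ∑ m : Fin n, (Hfun (fhat ω) (X m ω) + lam * ∑ i,
              (X m ω i - curveOf (fhat ω) (sCoord (X m ω)) i)^2) :=
            mul_le_mul_of_nonneg_left (Finset.sum_le_sum hcomp) hninv
      have h2 : empObj n lam (fun m => X m ω) (fhat ω) ≤ empObj n lam (fun m => X m ω) f :=
        hmin f hf hconj
      have h3 : empObj n lam (fun m => X m ω) f = F2 ω + lam * F1 ω := by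
        rw [empObj, hF1, hF2]
        simp only [hφ₂, hφ₁]
        rw [Finset.sum_add_distrib, ← Finset.mul_sum]
        ring
      linarith only [h1, h2, h3]
    have hM' := mul_le_mul_of_nonneg_left hM hden.le
    have hkey : (2*lam+1) * Mv ≤ (8*lam+2) * F1 ω + 4 * F2 ω := by linarith only [hM', hbb]
    have hfin := mul_le_mul_of_nonneg_left hkey (inv_nonneg.mpr hden.le)
    have hMvpos : Mv = (2*lam+1)⁻¹ * ((2*lam+1) * Mv) := by
      rw [← mul_assoc, inv_mul_cancel₀ hden.ne', one_mul]
    rw [hB]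
    calc Mv = (2*lam+1)⁻¹ * ((2*lam+1) * Mv) := hMvpos
      _ ≤ (2*lam+1)⁻¹ * ((8*lam+2) * F1 ω + 4 * F2 ω) := hfin
  -- conclude
  have hstep1 : ∫ ω, (n : ℝ)⁻¹ * ∑ m : Fin n, ∑ i,
      (curveOf f (sCoord (X m ω)) i - curveOf (fhat ω) (sCoord (X m ω)) i) ^ 2 ∂μ ≤
      ∫ ω, B ω ∂μ := integral_mono_ae hMSEint hBint hpath
  have hstep2 : ∫ ω, B ω ∂μ = (2*lam+1)⁻¹ * ((8*lam+2) * ∫ ω, F1 ω ∂μ + 4 * ∫ ω, F2 ω ∂μ) := by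
    rw [hB]
    rw [integral_const_mul]
    congr 1
    rw [integral_add (hF1int.const_mul _) (hF2int.const_mul _), integral_const_mul,
      integral_const_mul]
  have hstep3 : (2*lam+1)⁻¹ * ((8*lam+2) * ∫ ω, F1 ω ∂μ + 4 * ∫ ω, F2 ω ∂μ) ≤
      (32 * lam + 2 * m₂ + 8) / (2 * lam + 1) * ρ := by
    have h1 : (8*lam+2) * ∫ ω, F1 ω ∂μ ≤ (8*lam+2) * (4*ρ) :=
      mul_le_mul_of_nonneg_left hEF1 (by linarith)
    have h2 : (4:ℝ) * ∫ ω, F2 ω ∂μ ≤ 4 * (m₂/2*ρ) :=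
      mul_le_mul_of_nonneg_left hEF2 (by norm_num)
    have h3 : (2*lam+1)⁻¹ * ((8*lam+2) * (4*ρ) + 4 * (m₂/2*ρ)) =
        (32 * lam + 2 * m₂ + 8) / (2 * lam + 1) * ρ := by
      field_simp
      ring
    rw [← h3]
    apply mul_le_mul_of_nonneg_left _ (by positivity)
    linarith
  calc _ ≤ ∫ ω, B ω ∂μ := hstep1
    _ = _ := hstep2
    _ ≤ _ := hstep3

end
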